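/- arXiv:1906.04339 — 2 statements merged into one kernel-verified Lean document; each statement's English description precedes it below -/
import Mathlib

section
/- For every integer n ≥ 3, G_n is 5-regular, its normalized Laplacian matrix equals (1/5)·L(G_n), and the characteristic polynomial of (1/5)·L(G_n) over ℝ factors as (X − 6/5)^n · ∏_{i=0}^{n−1} (X − (8/5)·sin²(iπ/n)). In particular the normalized Laplacian eigenvalues of G_n are 0, (8/5)·sin²(iπ/n) for i = 1, …, n−1, and 6/5 with multiplicity n. -/
open Polynomial Matrix Kronecker Complex

/-- The normalized Laplacian matrix `D^{-1/2} L D^{-1/2}` of a graph, where `D` is the diagonal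
matrix of vertex degrees and `L = D − A` is the Laplacian matrix (with the convention
`0^{-1/2} = 0` for isolated vertices, as provided by the real power function). -/
noncomputable def normalizedLapMatrix {V : Type*} [Fintype V] [DecidableEq V]
    (G : SimpleGraph V) [DecidableRel G.Adj] : Matrix V V ℝ :=
  Matrix.diagonal (fun v => (G.degree v : ℝ) ^ (-(1 / 2) : ℝ)) * G.lapMatrix ℝ *
    Matrix.diagonal (fun v => (G.degree v : ℝ) ^ (-(1 / 2) : ℝ))

/-- The graph `G_n = P₂ ⊠ C_n`: vertex set `(ZMod n) × Fin 2`, where two distinct vertices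
`(i,a)` and `(j,b)` are adjacent iff `i = j` or `i = j + 1` or `j = i + 1` in `ZMod n`. -/
def Gn (n : ℕ) : SimpleGraph (ZMod n × Fin 2) where
  Adj x y := x ≠ y ∧ (x.1 = y.1 ∨ x.1 = y.1 + 1 ∨ y.1 = x.1 + 1)
  symm := by
    constructor
    rintro x y ⟨hne, h | h | h⟩
    · exact ⟨hne.symm, Or.inl h.symm⟩
    · exact ⟨hne.symm, Or.inr (Or.inr h)⟩
    · exact ⟨hne.symm, Or.inr (Or.inl h)⟩
  loopless := by constructor; rintro x ⟨hne, -⟩; exact hne rfl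

instance (n : ℕ) : DecidableRel (Gn n).Adj :=
  fun _ _ => inferInstanceAs (Decidable (_ ∧ _))

theorem Gn_adj (n : ℕ) (x y : ZMod n × Fin 2) :
    (Gn n).Adj x y ↔ x ≠ y ∧ (x.1 = y.1 ∨ x.1 = y.1 + 1 ∨ y.1 = x.1 + 1) := Iff.rfl

theorem Gn_regular (n : ℕ) [NeZero n] (hn : 3 ≤ n) : (Gn n).IsRegularOfDegree 5 := by
  have h1 : (1 : ZMod n) ≠ 0 := by
    intro h
    have hd := (ZMod.natCast_eq_zero_iff 1 n).mp (by exact_mod_cast h)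
    have := Nat.le_of_dvd one_pos hd
    omega
  have h2 : (2 : ZMod n) ≠ 0 := by
    intro h
    have hd := (ZMod.natCast_eq_zero_iff 2 n).mp (by exact_mod_cast h)
    have := Nat.le_of_dvd two_pos hd
    omega
  rintro ⟨i, a⟩
  have hfin : ∀ a b : Fin 2, b = a ∨ b = a + 1 := by decide
  have hfin2 : ∀ a : Fin 2, ¬ (a + 1 = a) := by decide
  have hsub : i - 1 ≠ i + 1 := fun h => h2 (by linear_combination -h)
  have hsub1 : i - 1 ≠ i := fun h => h1 (by linear_combination -h)
  have hsub2 : i + 1 ≠ i := fun h => h1 (by linear_combination h)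
  have hnb : (Gn n).neighborFinset (i, a) =
      {(i-1,a),(i-1,a+1),(i+1,a),(i+1,a+1),(i,a+1)} := by
    ext ⟨j, b⟩
    rw [SimpleGraph.mem_neighborFinset, Gn_adj]
    simp only [Finset.mem_insert, Finset.mem_singleton, Prod.mk.injEq, ne_eq]
    constructor
    · rintro ⟨hne, hij | hij | hij⟩
      · rcases hfin a b with rfl | rfl
        · exact absurd ⟨hij, rfl⟩ hne
        · right; right; right; right; exact ⟨hij.symm, rfl⟩
      · have hj : j = i - 1 := by rw [hij]; ring
        rcases hfin a b with rfl | rfl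
        · left; exact ⟨hj, rfl⟩
        · right; left; exact ⟨hj, rfl⟩
      · rcases hfin a b with rfl | rfl
        · right; right; left; exact ⟨hij, rfl⟩
        · right; right; right; left; exact ⟨hij, rfl⟩
    · have hadd : i = i - 1 + 1 := by ring
      rintro (⟨rfl, rfl⟩ | ⟨rfl, rfl⟩ | ⟨rfl, rfl⟩ | ⟨rfl, rfl⟩ | ⟨rfl, rfl⟩)
      · exact ⟨by simp [Prod.ext_iff, hsub1.symm], Or.inr (Or.inl hadd)⟩
      · exact ⟨by simp [Prod.ext_iff, hsub1.symm], Or.inr (Or.inl hadd)⟩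
      · exact ⟨by simp [Prod.ext_iff, hsub2.symm], Or.inr (Or.inr rfl)⟩
      · exact ⟨by simp [Prod.ext_iff, hsub2.symm], Or.inr (Or.inr rfl)⟩
      · exact ⟨by simp [Prod.ext_iff, fun h : a = a + 1 => hfin2 a h.symm], Or.inl rfl⟩
  rw [SimpleGraph.degree, hnb]
  rw [Finset.card_insert_of_notMem (by simp [Prod.ext_iff, hsub1, hsub, fun h : a = a + 1 => hfin2 a h.symm]),
      Finset.card_insert_of_notMem (by simp [Prod.ext_iff, hsub1, hsub]),
      Finset.card_insert_of_notMem (by simp [Prod.ext_iff, hsub2, fun h : a = a + 1 => hfin2 a h.symm]),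
      Finset.card_insert_of_notMem (by simp [Prod.ext_iff, hsub2]),
      Finset.card_singleton]


noncomputable section SpecAux

variable (n : ℕ) [NeZero n]

def zetaC (n : ℕ) : ℂ := Complex.exp (2 * Real.pi * Complex.I / n)

def ee (n : ℕ) [NeZero n] (k : ZMod n) : ℂ := zetaC n ^ (k.val : ℤ)

lemma zetaC_prim : IsPrimitiveRoot (zetaC n) n :=
  Complex.isPrimitiveRoot_exp n (NeZero.ne n)

lemma zetaC_ne_zero : zetaC n ≠ 0 := Complex.exp_ne_zero _

lemma zetaC_zpow (a : ℤ) : zetaC n ^ a = ee n (a : ZMod n) := by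
  have hdvd : (n : ℤ) ∣ a - (((a : ZMod n)).val : ℤ) := by
    rw [← ZMod.intCast_zmod_eq_zero_iff_dvd]
    push_cast
    simp [ZMod.natCast_val]
  have h1 : zetaC n ^ (a - (((a : ZMod n)).val : ℤ)) = 1 :=
    ((zetaC_prim n).zpow_eq_one_iff_dvd _).mpr hdvd
  have h2 := zpow_ne_zero (((a : ZMod n)).val : ℤ) (zetaC_ne_zero n)
  rw [zpow_sub₀ (zetaC_ne_zero n), div_eq_one_iff_eq h2] at h1
  rw [ee]
  exact h1

lemma ee_natCast (m : ℕ) : ee n (m : ZMod n) = zetaC n ^ (m : ℤ) := by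
  rw [zetaC_zpow]; norm_cast

lemma ee_intCast (a : ℤ) : ee n (a : ZMod n) = zetaC n ^ a := (zetaC_zpow n a).symm

lemma ee_add (x y : ZMod n) : ee n (x + y) = ee n x * ee n y := by
  have hx : ((x.val : ℤ) : ZMod n) = x := by push_cast [ZMod.natCast_val, ZMod.cast_id']; simp
  have hy : ((y.val : ℤ) : ZMod n) = y := by push_cast [ZMod.natCast_val, ZMod.cast_id']; simp
  have : x + y = (((x.val : ℤ) + (y.val : ℤ) : ℤ) : ZMod n) := by push_cast [hx, hy]; ring
  rw [this, ← zetaC_zpow, zpow_add₀ (zetaC_ne_zero n)]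
  rfl

lemma ee_zero : ee n (0 : ZMod n) = 1 := by
  have : ((0 : ℤ) : ZMod n) = 0 := by norm_cast
  rw [← this, ← zetaC_zpow, zpow_zero]

lemma ee_mul_ee_neg (x : ZMod n) : ee n x * ee n (-x) = 1 := by
  rw [← ee_add, add_neg_cancel, ee_zero]

lemma ee_eq_one_iff (c : ZMod n) : ee n c = 1 ↔ c = 0 := by
  constructor
  · intro h
    rw [ee] at h
    have := ((zetaC_prim n).zpow_eq_one_iff_dvd _).mp h
    have hlt := ZMod.val_lt c
    have : (n : ℤ) ∣ (c.val : ℤ) := this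
    have h' := (Int.natCast_dvd_natCast).mp this
    have hv : c.val = 0 := Nat.eq_zero_of_dvd_of_lt h' hlt
    exact (ZMod.val_eq_zero c).mp hv
  · rintro rfl; exact ee_zero n

lemma sum_zmod (g : ℕ → ℂ) : ∑ k : ZMod n, g k.val = ∑ m ∈ Finset.range n, g m := by
  refine Finset.sum_bij' (fun k _ => k.val) (fun m _ => (m : ZMod n)) ?_ ?_ ?_ ?_ ?_
  · intro a _; exact Finset.mem_range.mpr (ZMod.val_lt a)
  · intro a _; exact Finset.mem_univ _
  · intro a _; exact ZMod.natCast_zmod_val a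
  · intro a ha; exact ZMod.val_cast_of_lt (Finset.mem_range.mp ha)
  · intro a _; rfl

lemma sum_ee (c : ZMod n) : ∑ k : ZMod n, ee n (k * c) = if c = 0 then (n : ℂ) else 0 := by
  split_ifs with h
  · subst h
    simp only [mul_zero, ee_zero]
    simp [Finset.card_univ, ZMod.card]
  · have key : ∀ k : ZMod n, ee n (k * c) = (ee n c) ^ (k.val) := by
      intro k
      have : k * c = (((k.val : ℤ) * (c.val : ℤ) : ℤ) : ZMod n) := by
        push_cast [ZMod.natCast_val, ZMod.cast_id']
        simp
      rw [this, ← zetaC_zpow, _root_.zpow_mul']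
      rw [ee]
      norm_cast
    simp_rw [key]
    rw [sum_zmod n (fun m => ee n c ^ m)]
    rw [geom_sum_eq]
    · have hcn : ee n c ^ n = 1 := by
        rw [ee, ← zpow_natCast, ← _root_.zpow_mul, mul_comm, _root_.zpow_mul]
        have hzn : zetaC n ^ (n : ℤ) = 1 := by
          rw [zpow_natCast, (zetaC_prim n).pow_eq_one]
        rw [hzn, _root_.one_zpow]
      rw [hcn, sub_self, zero_div]
    · intro h1
      exact h ((ee_eq_one_iff n c).mp h1)


def Fm (n : ℕ) [NeZero n] : Matrix (ZMod n) (ZMod n) ℂ := Matrix.of fun i k => ee n (i * k)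

def Fm' (n : ℕ) [NeZero n] : Matrix (ZMod n) (ZMod n) ℂ :=
  Matrix.of fun k j => (n : ℂ)⁻¹ * ee n (-(k * j))

lemma Fm_mul_Fm' : Fm n * Fm' n = 1 := by
  ext i j
  rw [Matrix.mul_apply]
  have hterm : ∀ k : ZMod n, Fm n i k * Fm' n k j = (n : ℂ)⁻¹ * ee n (k * (i - j)) := by
    intro k
    simp only [Fm, Fm', Matrix.of_apply]
    rw [show k * (i - j) = i * k + -(k * j) by ring, ee_add]
    ring
  simp_rw [hterm, ← Finset.mul_sum, sum_ee]
  have hn : (n : ℂ) ≠ 0 := Nat.cast_ne_zero.mpr (NeZero.ne n)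
  by_cases h : i = j
  · subst h
    simp [Matrix.one_apply, hn]
  · have : ¬ (i - j = 0) := fun hc => h (by linear_combination hc)
    simp [Matrix.one_apply, h, this]

lemma Fm'_mul_Fm : Fm' n * Fm n = 1 := mul_eq_one_comm.mp (Fm_mul_Fm' n)

def Sm (n : ℕ) : Matrix (ZMod n) (ZMod n) ℂ := Matrix.of fun i j => if i = j + 1 then 1 else 0

lemma Sm_mul_Fm : Sm n * Fm n = Fm n * Matrix.diagonal (fun k => ee n (-k)) := by
  ext i j
  rw [Matrix.mul_apply, Matrix.mul_diagonal]
  rw [Finset.sum_eq_single (i - 1)]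
  · simp only [Sm, Fm, Matrix.of_apply, if_pos (by ring : i = (i - 1) + 1), one_mul]
    rw [← ee_add]
    ring_nf
  · intro b _ hb
    simp only [Sm, Matrix.of_apply]
    rw [if_neg (fun hc => hb (by rw [hc]; ring)), zero_mul]
  · intro h
    exact absurd (Finset.mem_univ _) h

lemma Smt_mul_Fm : (Sm n)ᵀ * Fm n = Fm n * Matrix.diagonal (fun k => ee n k) := by
  ext i j
  rw [Matrix.mul_apply, Matrix.mul_diagonal]
  rw [Finset.sum_eq_single (i + 1)]
  · simp only [Sm, Matrix.transpose_apply, Fm, Matrix.of_apply]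
    rw [if_pos trivial, one_mul, ← ee_add]
    ring_nf
  · intro b _ hb
    simp only [Sm, Matrix.transpose_apply, Matrix.of_apply]
    rw [if_neg (fun hc => hb hc), zero_mul]
  · intro h
    exact absurd (Finset.mem_univ _) h

def Hm : Matrix (Fin 2) (Fin 2) ℂ := !![1, 1; 1, -1]

def Hm' : Matrix (Fin 2) (Fin 2) ℂ := !![1/2, 1/2; 1/2, -(1/2)]

lemma Hm_mul_Hm' : Hm * Hm' = 1 := by
  rw [Hm, Hm', Matrix.one_fin_two]
  norm_num [Matrix.mul_fin_two]

def Jm : Matrix (Fin 2) (Fin 2) ℂ := Matrix.of fun _ _ => 1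

def Km : Matrix (Fin 2) (Fin 2) ℂ := Matrix.diagonal ![2, 0]

lemma diagKm : Km = !![2, 0; 0, 0] := by
  rw [Km]
  ext i j
  fin_cases i <;> fin_cases j <;> simp [Matrix.diagonal]

lemma Jm_mul_Hm : Jm * Hm = Hm * Km := by
  rw [Hm, diagKm]
  ext i j
  fin_cases i <;> fin_cases j <;>
    simp [Jm, Matrix.mul_apply, Fin.sum_univ_two] <;> norm_num


def Pm (n : ℕ) [NeZero n] : Matrix (ZMod n × Fin 2) (ZMod n × Fin 2) ℂ := Fm n ⊗ₖ Hm

def Qm (n : ℕ) [NeZero n] : Matrix (ZMod n × Fin 2) (ZMod n × Fin 2) ℂ := Fm' n ⊗ₖ Hm'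

lemma Pm_mul_Qm : Pm n * Qm n = 1 := by
  rw [Pm, Qm, ← Matrix.mul_kronecker_mul, Fm_mul_Fm', Hm_mul_Hm', Matrix.one_kronecker_one]

lemma Qm_mul_Pm : Qm n * Pm n = 1 := mul_eq_one_comm.mp (Pm_mul_Qm n)

def Tm (n : ℕ) : Matrix (ZMod n) (ZMod n) ℂ := 1 + Sm n + (Sm n)ᵀ

def Mc (n : ℕ) [NeZero n] : Matrix (ZMod n × Fin 2) (ZMod n × Fin 2) ℂ :=
  (6/5 : ℂ) • 1 - (1/5 : ℂ) • (Tm n ⊗ₖ Jm)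

def dfun (n : ℕ) [NeZero n] (v : ZMod n × Fin 2) : ℂ :=
  6/5 - 1/5 * ((1 + ee n (-v.1) + ee n v.1) * ![2, 0] v.2)

def Dm (n : ℕ) [NeZero n] : Matrix (ZMod n × Fin 2) (ZMod n × Fin 2) ℂ :=
  Matrix.diagonal (dfun n)

lemma Tm_mul_Fm : Tm n * Fm n =
    Fm n * Matrix.diagonal (fun k => 1 + ee n (-k) + ee n k) := by
  rw [Tm, add_mul, add_mul, one_mul, Sm_mul_Fm, Smt_mul_Fm]
  ext i j
  simp only [Matrix.mul_diagonal, Matrix.add_apply]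
  ring

lemma Dm_eq : (6/5 : ℂ) • (1 : Matrix (ZMod n × Fin 2) (ZMod n × Fin 2) ℂ) -
    (1/5 : ℂ) • ((Matrix.diagonal fun k => 1 + ee n (-k) + ee n k) ⊗ₖ Km) = Dm n := by
  rw [Km, Matrix.diagonal_kronecker_diagonal, Dm]
  ext v w
  by_cases h : v = w
  · subst h
    simp [Matrix.diagonal_apply_eq, dfun, Matrix.one_apply_eq]
    try ring
  · simp [Matrix.diagonal_apply_ne _ h, Matrix.one_apply_ne h]

lemma Mc_mul_Pm : Mc n * Pm n = Pm n * Dm n := by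
  rw [Mc, Pm, sub_mul, smul_mul_assoc, one_mul, smul_mul_assoc,
    ← Matrix.mul_kronecker_mul, Tm_mul_Fm, Jm_mul_Hm, Matrix.mul_kronecker_mul,
    ← Dm_eq, mul_sub, mul_smul_comm, mul_one, mul_smul_comm]

lemma Mc_eq : Mc n = Pm n * Dm n * Qm n := by
  calc Mc n = Mc n * (Pm n * Qm n) := by rw [Pm_mul_Qm, mul_one]
  _ = (Mc n * Pm n) * Qm n := by rw [mul_assoc]
  _ = Pm n * Dm n * Qm n := by rw [Mc_mul_Pm]

lemma charpoly_PDQ {m : Type*} [Fintype m] [DecidableEq m] (P Q D : Matrix m m ℂ)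
    (hPQ : P * Q = 1) : (P * D * Q).charpoly = D.charpoly := by
  have hmap : (P.map (C : ℂ →+* ℂ[X])) * (Q.map C) = 1 := by
    rw [← Matrix.map_mul, hPQ, Matrix.map_one _ (map_zero C) (map_one C)]
  have hchar : Matrix.charmatrix (P * D * Q) =
      (P.map C) * Matrix.charmatrix D * (Q.map C) := by
    rw [Matrix.charmatrix, Matrix.charmatrix, mul_sub, sub_mul]
    congr 1
    · rw [show (Matrix.scalar m (X : ℂ[X])) = (X : ℂ[X]) • (1 : Matrix m m ℂ[X]) by
        rw [Matrix.scalar_apply, Matrix.smul_one_eq_diagonal]]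
      rw [mul_smul_comm, mul_one, smul_mul_assoc, hmap]
    · rw [_root_.map_mul, _root_.map_mul]
      simp [RingHom.mapMatrix_apply]
  rw [Matrix.charpoly, Matrix.charpoly, hchar, Matrix.det_mul, Matrix.det_mul]
  have : (P.map (C : ℂ →+* ℂ[X])).det * (Q.map C).det = 1 := by
    rw [← Matrix.det_mul, hmap, Matrix.det_one]
  calc (P.map C).det * (Matrix.charmatrix D).det * (Q.map C).det
      = (Matrix.charmatrix D).det * ((P.map C).det * (Q.map C).det) := by ring
  _ = (Matrix.charmatrix D).det := by rw [this, mul_one]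

lemma charpoly_diagonal {m : Type*} [Fintype m] [DecidableEq m] (d : m → ℂ) :
    (Matrix.diagonal d).charpoly = ∏ i, (X - C (d i)) := by
  have hc : Matrix.charmatrix (Matrix.diagonal d) =
      Matrix.diagonal (fun i => (X : ℂ[X]) - C (d i)) := by
    ext i j
    by_cases h : i = j
    · subst h
      rw [Matrix.charmatrix_apply_eq, Matrix.diagonal_apply_eq, Matrix.diagonal_apply_eq]
    · rw [Matrix.charmatrix_apply_ne _ _ _ h, Matrix.diagonal_apply_ne _ h,
        Matrix.diagonal_apply_ne _ h, map_zero, neg_zero]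
  rw [Matrix.charpoly, hc, Matrix.det_diagonal]

lemma charpoly_Mc : (Mc n).charpoly = ∏ v : ZMod n × Fin 2, (X - C (dfun n v)) := by
  rw [Mc_eq, charpoly_PDQ _ _ _ (Pm_mul_Qm n), Dm, _root_.charpoly_diagonal]


lemma dfun_val (i : ℕ) :
    dfun n ((i : ZMod n), 0) = ((8/5 * Real.sin (i * Real.pi / n) ^ 2 : ℝ) : ℂ) := by
  set θ : ℝ := 2 * Real.pi * i / n with hθ
  have h1 : ee n ((i : ZMod n)) = Complex.exp ((θ : ℂ) * Complex.I) := by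
    rw [ee_natCast, zpow_natCast, zetaC, ← Complex.exp_nat_mul]
    congr 1
    rw [hθ]
    push_cast
    ring
  have h2 : ee n (-(i : ZMod n)) = Complex.exp (-(θ : ℂ) * Complex.I) := by
    have hc : (-(i : ZMod n)) = (((-(i : ℤ)) : ℤ) : ZMod n) := by push_cast; ring
    rw [hc, ee_intCast, _root_.zpow_neg, zpow_natCast, zetaC, ← Complex.exp_nat_mul, ← Complex.exp_neg]
    congr 1
    rw [hθ]
    push_cast
    ring
  have hident : (8/5 * Real.sin (i * Real.pi / n) ^ 2 : ℝ) = 4/5 - 4/5 * Real.cos θ := by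
    have harg : θ = 2 * ((i : ℝ) * Real.pi / n) := by rw [hθ]; ring
    rw [harg, Real.cos_two_mul]
    have hsc := Real.sin_sq_add_cos_sq ((i : ℝ) * Real.pi / n)
    linear_combination (8/5 : ℝ) * hsc
  simp only [dfun, h1, h2]
  rw [Complex.exp_mul_I, Complex.exp_mul_I, hident]
  simp only [Complex.cos_neg, Complex.sin_neg, Matrix.cons_val_zero]
  push_cast
  rw [← Complex.ofReal_cos]
  ring


lemma prod_dfun :
    ∏ v : ZMod n × Fin 2, (X - C (dfun n v)) =
      (X - C (6/5 : ℂ)) ^ n *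
        ∏ i ∈ Finset.range n, (X - C (((8/5 * Real.sin (i * Real.pi / n) ^ 2 : ℝ)) : ℂ)) := by
  rw [Fintype.prod_prod_type]
  have h1 : ∀ k : ZMod n, ∏ s : Fin 2, (X - C (dfun n (k, s)))
      = (X - C (dfun n (k, 0))) * (X - C (6/5 : ℂ)) := by
    intro k
    rw [Fin.prod_univ_two]
    congr 2
    simp [dfun]
  simp_rw [h1]
  rw [Finset.prod_mul_distrib, Finset.prod_const, Finset.card_univ, ZMod.card, mul_comm]
  congr 1
  refine Finset.prod_bij' (fun (k : ZMod n) _ => k.val) (fun m _ => ((m : ZMod n))) ?_ ?_ ?_ ?_ ?_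
  · intro a _; exact Finset.mem_range.mpr (ZMod.val_lt a)
  · intro a _; exact Finset.mem_univ _
  · intro a _; exact ZMod.natCast_zmod_val a
  · intro a ha; exact ZMod.val_cast_of_lt (Finset.mem_range.mp ha)
  · intro a _
    conv_lhs => rw [← ZMod.natCast_zmod_val a]
    rw [dfun_val]

lemma map_lap (hn : 3 ≤ n) :
    ((1/5 : ℝ) • (Gn n).lapMatrix ℝ).map Complex.ofRealHom = Mc n := by
  have h1 : (1 : ZMod n) ≠ 0 := by
    intro h
    have hd := (ZMod.natCast_eq_zero_iff 1 n).mp (by exact_mod_cast h)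
    have := Nat.le_of_dvd one_pos hd
    omega
  have h2 : (2 : ZMod n) ≠ 0 := by
    intro h
    have hd := (ZMod.natCast_eq_zero_iff 2 n).mp (by exact_mod_cast h)
    have := Nat.le_of_dvd two_pos hd
    omega
  have hreg := Gn_regular n hn
  ext ⟨i, a⟩ ⟨j, b⟩
  simp only [Matrix.map_apply, Matrix.smul_apply, smul_eq_mul, SimpleGraph.lapMatrix,
    Matrix.sub_apply, SimpleGraph.degMatrix, Matrix.diagonal_apply,
    SimpleGraph.adjMatrix_apply, Gn_adj, Mc, Matrix.smul_apply, Matrix.one_apply,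
    Matrix.kroneckerMap_apply, Tm, Matrix.add_apply, Sm, Matrix.transpose_apply,
    Matrix.of_apply, Jm, hreg (i, a), ne_eq, smul_eq_mul]
  by_cases hv : (i, a) = (j, b)
  · rw [Prod.mk.injEq] at hv
    obtain ⟨rfl, rfl⟩ := hv
    have e1 : ¬ (i = i + 1) := fun hc => h1 (by linear_combination -hc)
    simp [e1, Prod.mk.injEq, Jm]
    norm_num
  · by_cases hij : i = j
    · subst hij
      have hab : a ≠ b := fun h => hv (by rw [h])
      have e1 : ¬ (i = i + 1) := fun hc => h1 (by linear_combination -hc)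
      simp [hv, hab, Prod.mk.injEq, e1, Jm]
      try push_cast
      try norm_num
    · by_cases hij2 : i = j + 1
      · have e3 : ¬ (j = i + 1) := by
          intro hc
          rw [hij2] at hc
          exact h2 (by linear_combination -hc)
        have e4 : ¬ (j = j + 1 + 1) := fun hc => h2 (by linear_combination -hc)
        simp [hv, hij, hij2, e3, e4, h1, Prod.mk.injEq, Jm]
        try push_cast
        try norm_num
      · by_cases hij3 : j = i + 1
        · have e5 : ¬ (i = i + 1 + 1) := fun hc => h2 (by linear_combination -hc)
          simp [hv, hij, hij2, hij3, e5, h1, Prod.mk.injEq, Jm]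
          try push_cast
          try norm_num
        · simp [hv, hij, hij2, hij3, Prod.mk.injEq, Jm]

end SpecAux

/-- For every integer `n ≥ 3`, the graph `G_n = P₂ ⊠ C_n` is 5-regular, its
normalized Laplacian matrix equals `(1/5)·L(G_n)`, and the characteristic polynomial of
`(1/5)·L(G_n)` over `ℝ` factors as
`(X − 6/5)^n · ∏_{i=0}^{n−1} (X − (8/5)·sin²(iπ/n))`. -/
theorem normalizedLap_Gn (n : ℕ) [NeZero n] (hn : 3 ≤ n) :
    (Gn n).IsRegularOfDegree 5 ∧
    normalizedLapMatrix (Gn n) = (1 / 5 : ℝ) • (Gn n).lapMatrix ℝ ∧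
    ((1 / 5 : ℝ) • (Gn n).lapMatrix ℝ).charpoly =
      (X - C (6 / 5 : ℝ)) ^ n *
        ∏ i ∈ Finset.range n, (X - C (8 / 5 * Real.sin (i * Real.pi / n) ^ 2)) := by

  have hreg := Gn_regular n hn
  refine ⟨hreg, ?_, ?_⟩
  · have h5 : (5 : ℝ) ^ (-(1/2) : ℝ) * (5 : ℝ) ^ (-(1/2) : ℝ) = 1/5 := by
      rw [← Real.rpow_add (by norm_num : (0:ℝ) < 5)]
      rw [show (-(1/2) + -(1/2) : ℝ) = ((-1 : ℤ) : ℝ) by norm_num, Real.rpow_intCast]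
      norm_num
    ext v w
    rw [normalizedLapMatrix, Matrix.mul_diagonal, Matrix.diagonal_mul, hreg v, hreg w,
      Matrix.smul_apply, smul_eq_mul]
    push_cast
    linear_combination ((Gn n).lapMatrix ℝ v w) * h5
  · apply Polynomial.map_injective (Complex.ofRealHom) Complex.ofReal_injective
    rw [← Matrix.charpoly_map, map_lap n hn, charpoly_Mc, prod_dfun]
    rw [Polynomial.map_mul, Polynomial.map_pow, Polynomial.map_sub, Polynomial.map_X,
      Polynomial.map_C, Polynomial.map_prod]
    simp only [Polynomial.map_sub, Polynomial.map_X, Polynomial.map_C]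
    norm_num
end

section
/- The ratio of the multiplicative degree-Kirchhoff index of G_n to its Gutman index tends to 1/6 as n → ∞; that is, the sequence ((25n³ + 100n² − 25n)/12) / Gut(G_n), where (25n³ + 100n² − 25n)/12 is the multiplicative degree-Kirchhoff index of G_n and Gut(G_n) is its Gutman index, converges to 1/6 as n → ∞. -/
/-- The Gutman index of a graph: half the sum of `deg(u)·deg(v)·d(u,v)` over all ordered pairs
`(u,v)` of vertices, where `deg(u)` is the number of neighbours of `u` (a finite sum for a
finite graph, expressed with `finsum`/`ncard` so that it is defined for every `n`). -/
noncomputable def gutmanIndex {V : Type*} (G : SimpleGraph V) : ℕ :=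
  (∑ᶠ u : V, ∑ᶠ v : V,
    (G.neighborSet u).ncard * (G.neighborSet v).ncard * G.dist u v) / 2

open SimpleGraph

/-- circular distance in `ZMod n` -/
def cd {n : ℕ} (i j : ZMod n) : ℕ := min (j - i).val ((i - j).val)

lemma cd_comm {n : ℕ} (i j : ZMod n) : cd i j = cd j i := min_comm _ _

lemma cd_self {n : ℕ} (i : ZMod n) : cd i i = 0 := by simp [cd]

lemma cd_step {n : ℕ} (hn : 3 ≤ n) (i j : ZMod n) : cd i j ≤ cd (i + 1) j + 1 := by
  haveI : NeZero n := ⟨by omega⟩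
  have h1 : (1 : ZMod n).val = 1 := ZMod.val_one'' (by omega)
  set d := j - i with hd
  have e1 : j - (i + 1) = d - 1 := by ring
  have e2 : (i + 1) - j = -(d - 1) := by ring
  have e3 : i - j = -d := by ring
  rw [cd, cd, ← hd, e1, e2, e3]
  by_cases h0 : d = 0
  · simp [h0]
  · have hdv : 1 ≤ d.val := Nat.one_le_iff_ne_zero.mpr (fun h => h0 ((ZMod.val_eq_zero d).mp h))
    have hsub : (d - 1).val = d.val - 1 := by
      rw [ZMod.val_sub (by omega)]; omega
    have hnd : (-d).val = n - d.val := by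
      haveI : NeZero d := ⟨h0⟩
      exact ZMod.val_neg_of_ne_zero d
    rw [← Nat.add_min_add_right]
    refine le_min ?_ ?_
    · exact le_trans (min_le_left _ _) (by omega)
    · by_cases h1' : d = 1
      · rw [h1']
        simp only [sub_self, neg_zero, ZMod.val_zero]
        exact le_trans (min_le_left _ _) (by simp [h1])
      · have hne : d - 1 ≠ 0 := sub_ne_zero.mpr h1'
        haveI : NeZero (d - 1) := ⟨hne⟩
        have : (-(d - 1)).val = n - (d - 1).val := ZMod.val_neg_of_ne_zero _
        have hdlt : d.val < n := ZMod.val_lt d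
        refine le_trans (min_le_right _ _) ?_
        rw [this, hsub, hnd]
        omega

lemma cd_step' {n : ℕ} (hn : 3 ≤ n) (i j : ZMod n) : cd (i + 1) j ≤ cd i j + 1 := by
  have h := cd_step hn j (i + 1)
  have e : cd (j + 1) (i + 1) = cd j i := by
    unfold cd; ring_nf
  rw [cd_comm (i+1) j, cd_comm i j]
  calc cd j (i + 1) ≤ cd (j + 1) (i + 1) + 1 := h
    _ = cd j i + 1 := by rw [e]

lemma walk_lb {n : ℕ} (hn : 3 ≤ n) {u v : ZMod n × Fin 2} (p : (Gn n).Walk u v) :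
    cd u.1 v.1 ≤ p.length := by
  induction p with
  | nil => simp [cd_self]
  | @cons a b c h q ih =>
    rw [SimpleGraph.Walk.length_cons]
    rcases h.2 with h' | h' | h'
    · rw [h']; omega
    · calc cd a.1 c.1 = cd (b.1 + 1) c.1 := by rw [h']
        _ ≤ cd b.1 c.1 + 1 := cd_step' hn _ _
        _ ≤ q.length + 1 := by omega
    · calc cd a.1 c.1 ≤ cd (a.1 + 1) c.1 + 1 := cd_step hn _ _
        _ = cd b.1 c.1 + 1 := by rw [h']
        _ ≤ q.length + 1 := by omega

lemma one_ne_zero_zmod {n : ℕ} (hn : 3 ≤ n) : (1 : ZMod n) ≠ 0 := by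
  haveI : NeZero n := ⟨by omega⟩
  intro h
  have := ZMod.val_one'' (n := n) (by omega)
  rw [h, ZMod.val_zero] at this
  omega

lemma adj_row {n : ℕ} (hn : 3 ≤ n) (i : ZMod n) (a b : Fin 2) :
    (Gn n).Adj (i, a) (i + 1, b) := by
  refine ⟨fun h => ?_, Or.inr (Or.inr rfl)⟩
  have := congrArg Prod.fst h
  simp only at this
  exact one_ne_zero_zmod hn (by linear_combination this - this + (left_eq_add.mp this))

/-- forward walk of length `m ≥ 1` -/
lemma exists_walk_forward {n : ℕ} (hn : 3 ≤ n) (i : ZMod n) (a b : Fin 2) :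
    ∀ m : ℕ, 1 ≤ m → ∃ p : (Gn n).Walk (i, a) (i + (m : ZMod n), b), p.length = m := by
  intro m hm
  induction m with
  | zero => omega
  | succ k ih =>
    rcases Nat.eq_or_lt_of_le hm with h | h
    · obtain rfl : k = 0 := by omega
      have hadj : (Gn n).Adj (i, a) (i + ((0 + 1 : ℕ) : ZMod n), b) := by
        rw [show ((0 + 1 : ℕ) : ZMod n) = 1 by norm_num]
        exact adj_row hn i a b
      exact ⟨SimpleGraph.Walk.cons hadj SimpleGraph.Walk.nil, by simp⟩
    · obtain ⟨p, hp⟩ := ih (by omega)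
      have hadj : (Gn n).Adj (i + (k : ZMod n), b) (i + ((k + 1 : ℕ) : ZMod n), b) := by
        have : ((k + 1 : ℕ) : ZMod n) = (k : ZMod n) + 1 := by push_cast; ring
        rw [this, ← add_assoc]
        exact adj_row hn _ b b
      exact ⟨p.concat hadj, by rw [SimpleGraph.Walk.length_concat, hp]⟩

lemma dist_le_forward {n : ℕ} (hn : 3 ≤ n) (i : ZMod n) (a b : Fin 2) (m : ℕ) (hm : 1 ≤ m) :
    (Gn n).dist (i, a) (i + (m : ZMod n), b) ≤ m := by
  obtain ⟨p, hp⟩ := exists_walk_forward hn i a b m hm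
  exact le_trans (SimpleGraph.dist_le p) (le_of_eq hp)

lemma reachable_gn {n : ℕ} (hn : 3 ≤ n) (u v : ZMod n × Fin 2) : (Gn n).Reachable u v := by
  obtain ⟨i, a⟩ := u; obtain ⟨j, b⟩ := v
  haveI : NeZero n := ⟨by omega⟩
  by_cases h : i = j
  · subst h
    by_cases hab : a = b
    · subst hab; rfl
    · exact SimpleGraph.Adj.reachable ⟨by simp [Prod.ext_iff, hab], Or.inl rfl⟩
  · have hm : 1 ≤ (j - i).val := by
      refine Nat.one_le_iff_ne_zero.mpr (fun hz => h ?_)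
      exact (sub_eq_zero.mp ((ZMod.val_eq_zero _).mp hz)).symm
    obtain ⟨p, _⟩ := exists_walk_forward hn i a b (j - i).val hm
    rw [ZMod.natCast_zmod_val, add_sub_cancel] at p
    exact ⟨p⟩

lemma dist_eq_cd {n : ℕ} (hn : 3 ≤ n) (i j : ZMod n) (a b : Fin 2) (hij : i ≠ j) :
    (Gn n).dist (i, a) (j, b) = cd i j := by
  haveI : NeZero n := ⟨by omega⟩
  apply le_antisymm
  · refine le_min ?_ ?_
    · have hm : 1 ≤ (j - i).val := by
        refine Nat.one_le_iff_ne_zero.mpr (fun hz => hij ?_)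
        have := sub_eq_zero.mp ((ZMod.val_eq_zero _).mp hz)
        exact this.symm
      have := dist_le_forward hn i a b (j - i).val hm
      rwa [ZMod.natCast_zmod_val, add_sub_cancel] at this
    · have hm : 1 ≤ (i - j).val := by
        refine Nat.one_le_iff_ne_zero.mpr (fun hz => hij ?_)
        exact sub_eq_zero.mp ((ZMod.val_eq_zero _).mp hz)
      have := dist_le_forward hn j b a (i - j).val hm
      rw [ZMod.natCast_zmod_val, add_sub_cancel] at this
      rwa [SimpleGraph.dist_comm] at this
  · obtain ⟨p, hp⟩ := (reachable_gn hn (i, a) (j, b)).exists_walk_length_eq_dist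
    have := walk_lb hn p
    rw [hp] at this
    exact this

lemma dist_same_col {n : ℕ} (hn : 3 ≤ n) (i : ZMod n) (a b : Fin 2) (hab : a ≠ b) :
    (Gn n).dist (i, a) (i, b) = 1 := by
  exact SimpleGraph.dist_eq_one_iff_adj.mpr ⟨by simp [Prod.ext_iff, hab], Or.inl rfl⟩

lemma two_ne_zero_zmod {n : ℕ} (hn : 3 ≤ n) : (2 : ZMod n) ≠ 0 := by
  haveI : NeZero n := ⟨by omega⟩
  intro h
  rw [show (2 : ZMod n) = ((2 : ℕ) : ZMod n) by norm_num] at h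
  rw [ZMod.natCast_eq_zero_iff] at h
  have := Nat.le_of_dvd (by norm_num) h
  omega

lemma neighborSet_eq {n : ℕ} (hn : 3 ≤ n) (u : ZMod n × Fin 2) :
    (Gn n).neighborSet u =
      {(u.1 + 1, 0), (u.1 + 1, 1), (u.1 - 1, 0), (u.1 - 1, 1), (u.1, u.2 + 1)} := by
  obtain ⟨i, a⟩ := u
  have h1 : (1 : ZMod n) ≠ 0 := one_ne_zero_zmod hn
  have hfin : ∀ x y : Fin 2, x ≠ y → y = x + 1 := by decide
  have hfin2 : ∀ x : Fin 2, x = 0 ∨ x = 1 := by decide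
  have hfin3 : ∀ x : Fin 2, x ≠ x + 1 := by decide
  ext ⟨j, b⟩
  simp only [SimpleGraph.mem_neighborSet, Set.mem_insert_iff, Set.mem_singleton_iff]
  constructor
  · rintro ⟨hne, h | h | h⟩ <;> dsimp only at h
    · have hb : b = a + 1 := hfin a b (fun hab => hne (by simp [Prod.ext_iff, h, hab]))
      right; right; right; right
      rw [Prod.mk.injEq]
      exact ⟨h.symm, hb⟩
    · have hj : j = i - 1 := by rw [h]; ring
      rcases hfin2 b with hb | hb
      · right; right; left; rw [Prod.mk.injEq]; exact ⟨hj, hb⟩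
      · right; right; right; left; rw [Prod.mk.injEq]; exact ⟨hj, hb⟩
    · rcases hfin2 b with hb | hb
      · left; rw [Prod.mk.injEq]; exact ⟨h, hb⟩
      · right; left; rw [Prod.mk.injEq]; exact ⟨h, hb⟩
  · rintro (h | h | h | h | h) <;> rw [Prod.mk.injEq] at h <;> obtain ⟨rfl, rfl⟩ := h
    · refine ⟨fun hh => ?_, Or.inr (Or.inr rfl)⟩
      have := congrArg Prod.fst hh
      dsimp only at this
      exact h1 (by linear_combination -this)
    · refine ⟨fun hh => ?_, Or.inr (Or.inr rfl)⟩
      have := congrArg Prod.fst hh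
      dsimp only at this
      exact h1 (by linear_combination -this)
    · refine ⟨fun hh => ?_, Or.inr (Or.inl (by dsimp only; ring))⟩
      have := congrArg Prod.fst hh
      dsimp only at this
      exact h1 (by linear_combination this)
    · refine ⟨fun hh => ?_, Or.inr (Or.inl (by dsimp only; ring))⟩
      have := congrArg Prod.fst hh
      dsimp only at this
      exact h1 (by linear_combination this)
    · refine ⟨fun hh => ?_, Or.inl rfl⟩
      have := congrArg Prod.snd hh
      dsimp only at this
      exact hfin3 a this

lemma ncard_neighborSet {n : ℕ} (hn : 3 ≤ n) (u : ZMod n × Fin 2) :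
    ((Gn n).neighborSet u).ncard = 5 := by
  haveI : NeZero n := ⟨by omega⟩
  have h1 : (1 : ZMod n) ≠ 0 := one_ne_zero_zmod hn
  have h2 : (2 : ZMod n) ≠ 0 := two_ne_zero_zmod hn
  have hd1 : u.1 + 1 ≠ u.1 - 1 := fun h => h2 (by linear_combination h)
  have hd2 : u.1 + 1 ≠ u.1 := fun h => h1 (by linear_combination h)
  have hd3 : u.1 - 1 ≠ u.1 := fun h => h1 (by linear_combination -h)
  have hfin : (0 : Fin 2) ≠ 1 := by decide
  rw [neighborSet_eq hn u]
  rw [Set.ncard_insert_of_notMem (by simp [Prod.ext_iff, hd1, hd2, hfin]) (Set.toFinite _),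
      Set.ncard_insert_of_notMem (by simp [Prod.ext_iff, hd1, hd2, hfin.symm]) (Set.toFinite _),
      Set.ncard_insert_of_notMem (by simp [Prod.ext_iff, hd3, hfin]) (Set.toFinite _),
      Set.ncard_insert_of_notMem (by simp [Prod.ext_iff, hd3, hfin.symm]) (Set.toFinite _),
      Set.ncard_singleton]

lemma S_eq : ∀ m : ℕ, ∑ k ∈ Finset.range m, min k (m - k) = m ^ 2 / 4 := by
  have key : ∀ m : ℕ, ∑ k ∈ Finset.range (m + 2), min k (m + 2 - k)
      = (∑ k ∈ Finset.range m, min k (m - k)) + (m + 1) := by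
    intro m
    rw [Finset.sum_range_succ']
    have h0 : min 0 (m + 2 - 0) = 0 := by omega
    rw [h0, add_zero]
    have : ∀ k ∈ Finset.range (m + 1), min (k + 1) (m + 2 - (k + 1)) = min k (m - k) + 1 := by
      intro k hk
      rw [Finset.mem_range] at hk
      omega
    rw [Finset.sum_congr rfl this, Finset.sum_add_distrib, Finset.sum_const, Finset.card_range,
      smul_eq_mul, mul_one, Finset.sum_range_succ]
    have : min m (m - m) = 0 := by omega
    omega
  intro m
  induction m using Nat.twoStepInduction with
  | zero => simp
  | one => simp
  | more m ih _ =>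
    rw [key m, ih]
    have : 4 * (m ^ 2 / 4) + m ^ 2 % 4 = m ^ 2 := Nat.div_add_mod _ _
    have h2 : (m + 2) ^ 2 = m ^ 2 + 4 * m + 4 := by ring
    omega

lemma sum_cd {n : ℕ} [NeZero n] (hn : 3 ≤ n) (i : ZMod n) :
    ∑ j : ZMod n, cd i j = n ^ 2 / 4 := by
  have hcd : ∀ d : ZMod n, cd i (d + i) = min d.val (n - d.val) := by
    intro d
    have e1 : d + i - i = d := by ring
    have e2 : i - (d + i) = -d := by ring
    rw [cd, e1, e2]
    by_cases h0 : d = 0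
    · simp [h0]
    · haveI : NeZero d := ⟨h0⟩
      rw [ZMod.val_neg_of_ne_zero]
  have step1 : ∑ j : ZMod n, cd i j = ∑ d : ZMod n, min d.val (n - d.val) := by
    rw [← Fintype.sum_bijective (· + i) (Equiv.addRight i).bijective
      (fun d => min d.val (n - d.val)) (fun j => cd i j) (fun d => (hcd d).symm)]
  rw [step1, ← S_eq n]
  refine Finset.sum_nbij' (fun d => d.val) (fun k => (k : ZMod n)) ?_ ?_ ?_ ?_ ?_
  · intro d _; exact Finset.mem_range.mpr d.val_lt
  · intro k _; exact Finset.mem_univ _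
  · intro d _; exact ZMod.natCast_zmod_val d
  · intro k hk; exact ZMod.val_cast_of_lt (Finset.mem_range.mp hk)
  · intro d _; rfl

lemma gnInnerSum {n : ℕ} [NeZero n] (hn : 3 ≤ n) (u : ZMod n × Fin 2) :
    ∑ v : ZMod n × Fin 2, (Gn n).dist u v = 1 + 2 * (n ^ 2 / 4) := by
  obtain ⟨i, a⟩ := u
  rw [Fintype.sum_prod_type]
  have hrow : ∀ j : ZMod n, ∑ b : Fin 2, (Gn n).dist (i, a) (j, b)
      = 2 * cd i j + (if j = i then 1 else 0) := by
    intro j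
    by_cases hj : j = i
    · subst hj
      rw [Fin.sum_univ_two, if_pos rfl, cd_self]
      rcases (show a = 0 ∨ a = 1 by omega) with rfl | rfl
      · rw [SimpleGraph.dist_self, dist_same_col hn j 0 1 (by decide)]
      · rw [SimpleGraph.dist_self, dist_same_col hn j 1 0 (by decide)]
    · rw [Fin.sum_univ_two, dist_eq_cd hn i j a 0 (fun h => hj h.symm),
        dist_eq_cd hn i j a 1 (fun h => hj h.symm), if_neg hj]
      ring
  rw [Finset.sum_congr rfl (fun j _ => hrow j), Finset.sum_add_distrib]
  simp only [Finset.sum_ite_eq', Finset.mem_univ, if_true]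
  rw [← Finset.mul_sum, sum_cd hn i]
  ring

lemma gutman_eq {n : ℕ} (hn : 3 ≤ n) :
    gutmanIndex (Gn n) = 25 * n * (1 + 2 * (n ^ 2 / 4)) := by
  haveI : NeZero n := ⟨by omega⟩
  rw [gutmanIndex, finsum_eq_sum_of_fintype]
  have hterm : ∀ u : ZMod n × Fin 2,
      (∑ᶠ v : ZMod n × Fin 2, ((Gn n).neighborSet u).ncard * ((Gn n).neighborSet v).ncard
        * (Gn n).dist u v) = 25 * (1 + 2 * (n ^ 2 / 4)) := by
    intro u
    rw [finsum_eq_sum_of_fintype]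
    have : ∀ v : ZMod n × Fin 2, ((Gn n).neighborSet u).ncard * ((Gn n).neighborSet v).ncard
        * (Gn n).dist u v = 25 * (Gn n).dist u v := by
      intro v; rw [ncard_neighborSet hn, ncard_neighborSet hn]
    rw [Finset.sum_congr rfl (fun v _ => this v), ← Finset.mul_sum, gnInnerSum hn u]
  rw [Finset.sum_congr rfl (fun u _ => hterm u), Finset.sum_const, Finset.card_univ]
  rw [Fintype.card_prod, ZMod.card, Fintype.card_fin, smul_eq_mul]
  have : n * 2 * (25 * (1 + 2 * (n ^ 2 / 4))) = 25 * n * (1 + 2 * (n ^ 2 / 4)) * 2 := by ring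
  rw [this, Nat.mul_div_cancel _ (by norm_num)]

open Filter Topology in
lemma key_tendsto (c : ℝ) :
    Tendsto (fun n : ℕ =>
      ((25 * (n : ℝ) ^ 3 + 100 * (n : ℝ) ^ 2 - 25 * (n : ℝ)) / 12) /
        ((25 * (n : ℝ) * ((n : ℝ) ^ 2 + c)) / 2)) atTop (nhds (1 / 6)) := by
  have h1 : Tendsto (fun n : ℕ => 1 / (n : ℝ)) atTop (nhds 0) :=
    tendsto_one_div_atTop_nhds_zero_nat
  have hF : ContinuousAt (fun x : ℝ =>
      ((25 + 100 * x - 25 * x ^ 2) / 12) / ((25 * (1 + c * x ^ 2)) / 2)) 0 := by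
    apply ContinuousAt.div
    · fun_prop
    · fun_prop
    · norm_num
  have hcomp := hF.tendsto.comp h1
  have hval : ((25 + 100 * (0:ℝ) - 25 * (0:ℝ) ^ 2) / 12) / ((25 * (1 + c * (0:ℝ) ^ 2)) / 2)
      = 1 / 6 := by norm_num
  rw [hval] at hcomp
  apply hcomp.congr'
  have : ∀ᶠ n : ℕ in atTop, |c| + 1 ≤ (n : ℝ) :=
    (tendsto_natCast_atTop_atTop (R := ℝ)).eventually_ge_atTop (|c| + 1)
  filter_upwards [this] with n hn
  have hx0 : (0:ℝ) < (n:ℝ) := lt_of_lt_of_le (by positivity) hn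
  have hx1 : (1:ℝ) ≤ (n:ℝ) := le_trans (by nlinarith [abs_nonneg c]) hn
  have hc : -c ≤ |c| := neg_le_abs c
  have hx2 : (0:ℝ) < (n:ℝ)^2 + c := by nlinarith
  show ((25 + 100 * (1/(n:ℝ)) - 25 * (1/(n:ℝ)) ^ 2) / 12) /
      ((25 * (1 + c * (1/(n:ℝ)) ^ 2)) / 2) = _
  rw [div_div_div_eq, div_div_div_eq]
  field_simp


open Filter Topology

/-- The ratio of the multiplicative degree-Kirchhoff index
`(25n³ + 100n² − 25n)/12` of `G_n = P₂ ⊠ C_n` to its Gutman index `Gut(G_n)` converges to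
`1/6` as `n → ∞`. -/
theorem mulDegKirchhoff_div_gutman_tendsto :
    Filter.Tendsto
      (fun n : ℕ =>
        ((25 * (n : ℝ) ^ 3 + 100 * n ^ 2 - 25 * n) / 12) / (gutmanIndex (Gn n) : ℝ))
      Filter.atTop (nhds (1 / 6)) := by
  refine tendsto_of_tendsto_of_tendsto_of_le_of_le' (key_tendsto 2) (key_tendsto (-2)) ?_ ?_
  · filter_upwards [eventually_ge_atTop 3] with n hn
    have hx : (3:ℝ) ≤ (n:ℝ) := by exact_mod_cast hn
    set x := (n:ℝ) with hxdef
    have hD : (gutmanIndex (Gn n) : ℝ) = 25 * x * (1 + 2 * ((n ^ 2 / 4 : ℕ) : ℝ)) := by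
      rw [gutman_eq hn]; push_cast; ring
    set t := ((n ^ 2 / 4 : ℕ) : ℝ) with htdef
    have ht1 : 4 * t ≤ x ^ 2 := by
      have := Nat.div_mul_le_self (n ^ 2) 4
      have h' : ((n ^ 2 / 4 * 4 : ℕ) : ℝ) ≤ ((n ^ 2 : ℕ) : ℝ) := by exact_mod_cast this
      push_cast at h'
      linarith
    have ht2 : x ^ 2 - 3 ≤ 4 * t := by
      have h0 : n ^ 2 ≤ n ^ 2 / 4 * 4 + 3 := by omega
      have h' : ((n ^ 2 : ℕ) : ℝ) ≤ ((n ^ 2 / 4 * 4 + 3 : ℕ) : ℝ) := by exact_mod_cast h0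
      push_cast at h'
      rw [htdef, hxdef]
      linarith
    have hN : (0:ℝ) ≤ (25 * x ^ 3 + 100 * x ^ 2 - 25 * x) / 12 := by nlinarith
    have hDpos : (0:ℝ) < 25 * x * (1 + 2 * t) := by nlinarith
    rw [hD]
    have hle : 25 * x * (1 + 2 * t) ≤ 25 * x * (x ^ 2 + 2) / 2 := by nlinarith
    exact div_le_div_of_nonneg_left hN hDpos (by linarith)
  · filter_upwards [eventually_ge_atTop 3] with n hn
    have hx : (3:ℝ) ≤ (n:ℝ) := by exact_mod_cast hn
    set x := (n:ℝ) with hxdef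
    have hD : (gutmanIndex (Gn n) : ℝ) = 25 * x * (1 + 2 * ((n ^ 2 / 4 : ℕ) : ℝ)) := by
      rw [gutman_eq hn]; push_cast; ring
    set t := ((n ^ 2 / 4 : ℕ) : ℝ) with htdef
    have ht2 : x ^ 2 - 3 ≤ 4 * t := by
      have h0 : n ^ 2 ≤ n ^ 2 / 4 * 4 + 3 := by omega
      have h' : ((n ^ 2 : ℕ) : ℝ) ≤ ((n ^ 2 / 4 * 4 + 3 : ℕ) : ℝ) := by exact_mod_cast h0
      push_cast at h'
      rw [htdef, hxdef]
      linarith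
    have hN : (0:ℝ) ≤ (25 * x ^ 3 + 100 * x ^ 2 - 25 * x) / 12 := by nlinarith
    have hDpos : (0:ℝ) < 25 * x * (x ^ 2 + -2) / 2 := by nlinarith
    rw [hD]
    have hle : 25 * x * (x ^ 2 + -2) / 2 ≤ 25 * x * (1 + 2 * t) := by nlinarith
    exact div_le_div_of_nonneg_left hN hDpos hle
end
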